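/- For 0 < λ < 1, the formula K(√λ) = (1/π) ∫_0^1 K(√(1−μ))/((1 − λμ)·√μ) dμ holds, where K(k) = ∫_0^{π/2} (1 − k² sin²θ)^{-1/2} dθ. -/

import Mathlib

open Real MeasureTheory intervalIntegral Filter Topology

/-- The complete elliptic integral of the first kind. -/
noncomputable def K (k : ℝ) : ℝ := ∫ θ in (0:ℝ)..(π/2), 1 / Real.sqrt (1 - k^2 * Real.sin θ ^ 2)

section aux

lemma swap_nonneg {f : ℝ → ℝ → ℝ} {s t : Set ℝ} (hs : MeasurableSet s) (ht : MeasurableSet t)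
    (hm : Measurable (Function.uncurry f))
    (h0 : ∀ x ∈ s, ∀ y ∈ t, 0 ≤ f x y)
    (hx : ∀ x ∈ s, IntegrableOn (f x) t)
    (hy : ∀ y ∈ t, IntegrableOn (fun x => f x y) s) :
    ∫ x in s, ∫ y in t, f x y = ∫ y in t, ∫ x in s, f x y := by
  have e1 : ∫ x in s, ∫ y in t, f x y =
      (∫⁻ x in s, ∫⁻ y in t, ENNReal.ofReal (f x y)).toReal := by
    rw [integral_eq_lintegral_of_nonneg_ae]
    · congr 1
      refine lintegral_congr_ae ?_
      filter_upwards [ae_restrict_mem hs] with x hxs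
      exact ofReal_integral_eq_lintegral_ofReal (hx x hxs)
        ((ae_restrict_mem ht).mono (h0 x hxs))
    · filter_upwards [ae_restrict_mem hs] with x hxs
      exact setIntegral_nonneg ht (h0 x hxs)
    · exact (hm.stronglyMeasurable.integral_prod_right').aestronglyMeasurable
  have e2 : ∫ y in t, ∫ x in s, f x y =
      (∫⁻ y in t, ∫⁻ x in s, ENNReal.ofReal (f x y)).toReal := by
    rw [integral_eq_lintegral_of_nonneg_ae]
    · congr 1
      refine lintegral_congr_ae ?_
      filter_upwards [ae_restrict_mem ht] with y hyt
      exact ofReal_integral_eq_lintegral_ofReal (hy y hyt)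
        ((ae_restrict_mem hs).mono (fun x hxs => h0 x hxs y hyt))
    · filter_upwards [ae_restrict_mem ht] with y hyt
      exact setIntegral_nonneg hs (fun x hxs => h0 x hxs y hyt)
    · exact ((hm.comp measurable_swap).stronglyMeasurable.integral_prod_right').aestronglyMeasurable
  rw [e1, e2]
  congr 1
  exact lintegral_lintegral_swap ((ENNReal.measurable_ofReal.comp hm).aemeasurable)

lemma den_pos {a b : ℝ} (ha : 0 < a) (hb : 0 < b) (θ : ℝ) :
    0 < a * Real.cos θ ^ 2 + b * Real.sin θ ^ 2 := by
  have h := Real.sin_sq_add_cos_sq θ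
  rcases le_total a b with h'|h'
  · nlinarith [sq_nonneg (Real.sin θ), sq_nonneg (Real.cos θ)]
  · nlinarith [sq_nonneg (Real.sin θ), sq_nonneg (Real.cos θ)]

lemma cos_sin_integral {a b : ℝ} (ha : 0 < a) (hb : 0 < b) :
    ∫ θ in (0:ℝ)..(π/2), 1 / (a * Real.cos θ ^ 2 + b * Real.sin θ ^ 2)
      = π / (2 * Real.sqrt (a * b)) := by
  set g : ℝ → ℝ := fun θ => 1 / (a * Real.cos θ ^ 2 + b * Real.sin θ ^ 2) with hg
  have hgc : Continuous g := by
    apply Continuous.div continuous_const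
    · fun_prop
    · intro θ; exact (den_pos ha hb θ).ne'
  set c : ℝ := Real.sqrt (b / a) with hc
  have hc0 : 0 < c := Real.sqrt_pos.mpr (div_pos hb ha)
  have hc2 : c ^ 2 = b / a := Real.sq_sqrt (div_pos hb ha).le
  have hb2 : a * c ^ 2 = b := by rw [hc2]; field_simp
  have hab : 0 < Real.sqrt (a * b) := Real.sqrt_pos.mpr (mul_pos ha hb)
  have hac2 : a * c = Real.sqrt (a * b) := by
    rw [hc, ← Real.sqrt_sq ha.le, ← Real.sqrt_mul (sq_nonneg a)]
    congr 1
    field_simp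
    ring_nf; rw [Real.sq_sqrt (sq_nonneg a)]
  set F : ℝ → ℝ := fun x => (1 / Real.sqrt (a * b)) * Real.arctan (c * Real.tan x) with hF
  have hderiv : ∀ x ∈ Set.Ioo (-(π/2)) (π/2), HasDerivAt F (g x) x := by
    intro x hx
    have hcos : 0 < Real.cos x := Real.cos_pos_of_mem_Ioo hx
    have h1 : HasDerivAt Real.tan (1 / Real.cos x ^ 2) x := Real.hasDerivAt_tan hcos.ne'
    have h2 : HasDerivAt (fun x => c * Real.tan x) (c * (1 / Real.cos x ^ 2)) x := h1.const_mul c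
    have h3 : HasDerivAt Real.arctan (1 / (1 + (c * Real.tan x) ^ 2)) (c * Real.tan x) :=
      Real.hasDerivAt_arctan _
    have h4 := (h3.comp x h2).const_mul (1 / Real.sqrt (a * b))
    refine h4.congr_deriv (Eq.symm ?_)
    have htan : Real.tan x = Real.sin x / Real.cos x := Real.tan_eq_sin_div_cos x
    have hd := den_pos ha hb x
    rw [hg, htan]
    have e1 : 1 + (c * (Real.sin x / Real.cos x)) ^ 2
        = (a * Real.cos x ^ 2 + b * Real.sin x ^ 2) / (a * Real.cos x ^ 2) := by
      field_simp
      linear_combination (Real.sin x ^ 2) * hb2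
    have hsab : Real.sqrt a * Real.sqrt b = Real.sqrt (a * b) := (Real.sqrt_mul ha.le b).symm
    rw [e1]
    field_simp
    linear_combination -hac2
  set G : ℝ → ℝ := fun x => ∫ t in (0:ℝ)..x, g t with hG
  have hGc : Continuous G :=
    intervalIntegral.continuous_primitive (fun x y => hgc.intervalIntegrable x y) 0
  have h1 : Tendsto G (𝓝[<] (π/2)) (𝓝 (G (π/2))) :=
    (hGc.tendsto _).mono_left nhdsWithin_le_nhds
  have h2 : Tendsto F (𝓝[<] (π/2)) (𝓝 (π / (2 * Real.sqrt (a * b)))) := by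
    have ht : Tendsto (fun x => c * Real.tan x) (𝓝[<] (π/2)) atTop :=
      (Real.tendsto_tan_pi_div_two).const_mul_atTop hc0
    have haq : Tendsto (fun x => Real.arctan (c * Real.tan x)) (𝓝[<] (π/2)) (𝓝 (π/2)) :=
      (Real.tendsto_arctan_atTop.mono_right nhdsWithin_le_nhds).comp ht
    have h5 := haq.const_mul (1 / Real.sqrt (a * b))
    rw [show (1 / Real.sqrt (a * b)) * (π/2) = π / (2 * Real.sqrt (a * b)) by ring] at h5
    exact h5
  have heq : ∀ᶠ x in 𝓝[<] (π/2), G x = F x := by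
    have hmem : Set.Ioo (0:ℝ) (π/2) ∈ 𝓝[<] (π/2) :=
      Ioo_mem_nhdsLT_of_mem ⟨by positivity, le_refl _⟩
    filter_upwards [hmem] with x hx
    have hsub : Set.uIcc (0:ℝ) x ⊆ Set.Ioo (-(π/2)) (π/2) := by
      rw [Set.uIcc_of_le hx.1.le]
      intro t ht
      exact ⟨by nlinarith [ht.1, Real.pi_pos], lt_of_le_of_lt ht.2 hx.2⟩
    have := intervalIntegral.integral_eq_sub_of_hasDerivAt
      (fun t ht => hderiv t (hsub ht)) (hgc.intervalIntegrable 0 x)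
    rw [hG]
    simp only []
    rw [this, hF]
    simp [Real.arctan_zero]
  exact tendsto_nhds_unique h1 (h2.congr' (EventuallyEq.symm heq))

lemma sin_image : Real.sin '' Set.Ioo 0 (π/2) = Set.Ioo 0 1 := by
  ext y
  constructor
  · rintro ⟨θ, hθ, rfl⟩
    refine ⟨Real.sin_pos_of_pos_of_lt_pi hθ.1 (by linarith [Real.pi_pos, hθ.2]), ?_⟩
    have h2 : Real.sin θ < Real.sin (π/2) :=
      Real.sin_lt_sin_of_lt_of_le_pi_div_two (by linarith [Real.pi_pos, hθ.1]) (le_refl _) hθ.2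
    simpa using h2
  · intro hy
    refine ⟨Real.arcsin y, ⟨Real.arcsin_pos.mpr hy.1, Real.arcsin_lt_pi_div_two.mpr hy.2⟩, ?_⟩
    exact Real.sin_arcsin (by linarith [hy.1]) hy.2.le

lemma alg_form {l : ℝ} (h0 : 0 < l) (h1 : l < 1) :
    ∫ u in Set.Ioo (0:ℝ) 1, 1 / Real.sqrt ((1 - u^2) * (1 - l * u^2)) = K (Real.sqrt l) := by
  have hK : K (Real.sqrt l) = ∫ θ in Set.Ioo (0:ℝ) (π/2), 1 / Real.sqrt (1 - l * Real.sin θ ^ 2) := by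
    rw [K, Real.sq_sqrt h0.le, intervalIntegral.integral_of_le (by positivity),
      MeasureTheory.integral_Ioc_eq_integral_Ioo]
  rw [hK, ← sin_image,
    MeasureTheory.integral_image_eq_integral_abs_deriv_smul measurableSet_Ioo
      (fun θ _ => (Real.hasDerivAt_sin θ).hasDerivWithinAt)
      (Real.injOn_sin.mono (fun θ hθ => Set.mem_Icc.mpr ⟨by linarith [hθ.1, Real.pi_pos], hθ.2.le⟩))]
  refine MeasureTheory.setIntegral_congr_fun measurableSet_Ioo (fun θ hθ => ?_)
  have hcos : 0 < Real.cos θ := Real.cos_pos_of_mem_Ioo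
    (Set.mem_Ioo.mpr ⟨by linarith [hθ.1, Real.pi_pos], hθ.2⟩)
  have hden : 0 < 1 - l * Real.sin θ ^ 2 := by
    nlinarith [Real.sin_sq_add_cos_sq θ, sq_nonneg (Real.sin θ), sq_nonneg (Real.cos θ)]
  have e1 : 1 - Real.sin θ ^ 2 = Real.cos θ ^ 2 := by
    nlinarith [Real.sin_sq_add_cos_sq θ]
  rw [smul_eq_mul, abs_of_pos hcos, e1,
    Real.sqrt_mul (sq_nonneg _), Real.sqrt_sq hcos.le]
  have hsq : Real.sqrt (1 - l * Real.sin θ ^ 2) ≠ 0 := (Real.sqrt_pos.mpr hden).ne'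
  rw [mul_one_div]
  rw [div_eq_div_iff (by positivity) (by positivity)]
  ring

lemma mu_slice_integrable {l : ℝ} (h0 : 0 < l) (h1 : l < 1) {μ : ℝ} (hμ : μ ∈ Set.Ioo (0:ℝ) 1) :
    IntegrableOn
      (fun θ => 1 / ((1 - l * μ) * Real.sqrt μ * Real.sqrt (Real.cos θ ^ 2 + μ * Real.sin θ ^ 2)))
      (Set.Ioo 0 (π/2)) := by
  have h1μ : 0 < 1 - l * μ := by nlinarith [hμ.1, hμ.2]
  have hd : ∀ θ : ℝ, 0 < Real.cos θ ^ 2 + μ * Real.sin θ ^ 2 := by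
    intro θ
    have := den_pos one_pos hμ.1 θ
    linarith [this]
  have hcont : ContinuousOn
      (fun θ => 1 / ((1 - l * μ) * Real.sqrt μ * Real.sqrt (Real.cos θ ^ 2 + μ * Real.sin θ ^ 2)))
      (Set.Icc 0 (π/2)) := by
    apply ContinuousOn.div continuousOn_const
    · fun_prop
    · intro θ _
      have h2 : 0 < Real.sqrt μ := Real.sqrt_pos.mpr hμ.1
      have h3 : 0 < Real.sqrt (Real.cos θ ^ 2 + μ * Real.sin θ ^ 2) := Real.sqrt_pos.mpr (hd θ)
      positivity
  exact (hcont.integrableOn_compact isCompact_Icc).mono_set Set.Ioo_subset_Icc_self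

lemma sub_mu' {l s c : ℝ} (h0 : 0 < l) (h1 : l < 1) (hs : 0 < s) (hs1 : s < 1)
    (hc : 0 < c) (hsc : s ^ 2 + c ^ 2 = 1) :
    IntegrableOn
      (fun μ => 1 / ((1 - l * μ) * Real.sqrt μ * Real.sqrt (c ^ 2 + μ * s ^ 2)))
      (Set.Ioo 0 1) ∧
    ∫ μ in Set.Ioo (0:ℝ) 1,
        1 / ((1 - l * μ) * Real.sqrt μ * Real.sqrt (c ^ 2 + μ * s ^ 2))
      = ∫ u in Set.Ioo (0:ℝ) 1, 2 / (1 - (s ^ 2 + l * c ^ 2) * u ^ 2) := by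
  have hden : ∀ u ∈ Set.Ioo (0:ℝ) 1, 0 < 1 - s^2 * u^2 := by
    intro u hu; nlinarith [hu.1, hu.2]
  have hm1 : s^2 + l * c^2 < 1 := by nlinarith [mul_pos (mul_pos hc hc) (sub_pos.mpr h1)]
  have hm0 : 0 < s^2 + l * c^2 := by positivity
  have hderiv : ∀ u ∈ Set.Ioo (0:ℝ) 1,
      HasDerivWithinAt (fun u => c^2 * u^2 / (1 - s^2 * u^2))
        (2 * c^2 * u / (1 - s^2 * u^2)^2) (Set.Ioo 0 1) u := by
    intro u hu
    have hd := hden u hu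
    have h1' : HasDerivAt (fun u : ℝ => c^2 * u^2) (c^2 * (2*u)) u := by
      simpa using (hasDerivAt_pow 2 u).const_mul (c^2)
    have h2' : HasDerivAt (fun u : ℝ => 1 - s^2 * u^2) (-(s^2 * (2*u))) u := by
      simpa using ((hasDerivAt_pow 2 u).const_mul (s^2)).const_sub 1
    have h3 := h1'.div h2' hd.ne'
    refine HasDerivAt.hasDerivWithinAt ?_
    refine h3.congr_deriv ?_
    field_simp
    ring
  have hmono : StrictMonoOn (fun u => c^2 * u^2 / (1 - s^2 * u^2)) (Set.Ioo 0 1) := by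
    intro u hu v hv huv
    have hdu := hden u hu
    have hdv := hden v hv
    simp only
    rw [div_lt_div_iff₀ hdu hdv]
    have huv2 : u^2 < v^2 := by nlinarith [hu.1]
    nlinarith [mul_pos (mul_pos hc hc) (sub_pos.mpr huv2)]
  have hinj : Set.InjOn (fun u => c^2 * u^2 / (1 - s^2 * u^2)) (Set.Ioo 0 1) := hmono.injOn
  have him : (fun u => c^2 * u^2 / (1 - s^2 * u^2)) '' Set.Ioo 0 1 = Set.Ioo 0 1 := by
    ext μ
    constructor
    · rintro ⟨u, hu, rfl⟩
      have hd := hden u hu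
      constructor
      · exact div_pos (mul_pos (pow_pos hc 2) (pow_pos hu.1 2)) hd
      · simp only
        rw [div_lt_one hd]
        nlinarith [hu.1, hu.2, hsc]
    · intro hμ
      have hpos : 0 < c^2 + μ * s^2 :=
        add_pos_of_pos_of_nonneg (pow_pos hc 2) (mul_nonneg hμ.1.le (sq_nonneg s))
      refine ⟨Real.sqrt (μ / (c^2 + μ * s^2)), ⟨?_, ?_⟩, ?_⟩
      · exact Real.sqrt_pos.mpr (div_pos hμ.1 hpos)
      · rw [show (1:ℝ) = Real.sqrt 1 by simp]
        apply Real.sqrt_lt_sqrt (div_nonneg hμ.1.le hpos.le)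
        rw [div_lt_one hpos]
        nlinarith [hμ.1, hμ.2, hsc, mul_pos (sub_pos.mpr hμ.2) (mul_pos hc hc)]
      · have hsq : (Real.sqrt (μ / (c^2 + μ * s^2)))^2 = μ / (c^2 + μ * s^2) :=
          Real.sq_sqrt (div_nonneg hμ.1.le hpos.le)
        simp only
        rw [hsq]
        rw [show 1 - s^2 * (μ / (c^2 + μ * s^2)) = c^2 / (c^2 + μ * s^2) by
          rw [mul_div_assoc', one_sub_div hpos.ne']; ring]
        field_simp
  have hpoint : ∀ u ∈ Set.Ioo (0:ℝ) 1,
      |2 * c^2 * u / (1 - s^2 * u^2)^2| •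
        (1 / ((1 - l * (c^2 * u^2 / (1 - s^2 * u^2)))
          * Real.sqrt (c^2 * u^2 / (1 - s^2 * u^2))
          * Real.sqrt (c^2 + (c^2 * u^2 / (1 - s^2 * u^2)) * s^2)))
        = 2 / (1 - (s^2 + l * c^2) * u^2) := by
    intro u hu
    have hd := hden u hu
    have hmu : 0 < 1 - (s^2 + l * c^2) * u^2 := by
      have h4 : u^2 < 1 := by nlinarith [hu.1, hu.2]
      nlinarith [mul_pos hm0 (sub_pos.mpr h4)]
    have hx0 : 0 < c^2 * u^2 / (1 - s^2 * u^2) :=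
      div_pos (mul_pos (pow_pos hc 2) (pow_pos hu.1 2)) hd
    have hxkey : Real.sqrt (c^2 * u^2 / (1 - s^2 * u^2))
        * Real.sqrt (c^2 + (c^2 * u^2 / (1 - s^2 * u^2)) * s^2)
        = c^2 * u / (1 - s^2 * u^2) := by
      rw [← Real.sqrt_mul hx0.le]
      have e : (c^2 * u^2 / (1 - s^2 * u^2)) * (c^2 + (c^2 * u^2 / (1 - s^2 * u^2)) * s^2)
          = (c^2 * u / (1 - s^2 * u^2))^2 := by
        have hd' : 1 - u^2*s^2 ≠ 0 := by rw [mul_comm]; exact hd.ne'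
        field_simp
        ring
      rw [e]
      exact Real.sqrt_sq (div_pos (mul_pos (pow_pos hc 2) hu.1) hd).le
    have h1x : 1 - l * (c^2 * u^2 / (1 - s^2 * u^2))
        = (1 - (s^2 + l * c^2) * u^2) / (1 - s^2 * u^2) := by
      rw [mul_div_assoc', one_sub_div hd.ne']
      ring
    have habs : |2 * c^2 * u / (1 - s^2 * u^2)^2| = 2 * c^2 * u / (1 - s^2 * u^2)^2 :=
      abs_of_pos (div_pos (mul_pos (mul_pos two_pos (pow_pos hc 2)) hu.1) (pow_pos hd 2))
    rw [smul_eq_mul, habs, mul_assoc (1 - l * (c^2 * u^2 / (1 - s^2 * u^2))), hxkey, h1x]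
    rw [div_mul_div_comm, mul_one]
    have e2 : (1 - s^2*u^2)^2 * ((1 - (s^2 + l*c^2)*u^2)/(1 - s^2*u^2) * (c^2*u/(1 - s^2*u^2)))
        = (1 - (s^2 + l*c^2)*u^2) * (c^2*u) := by
      field_simp
    rw [e2, div_eq_div_iff (mul_pos hmu (mul_pos (pow_pos hc 2) hu.1)).ne' hmu.ne']
    ring
  have hcont2 : IntegrableOn (fun u : ℝ => 2 / (1 - (s^2 + l * c^2) * u^2)) (Set.Ioo 0 1) := by
    have hd2 : ∀ u ∈ Set.Icc (0:ℝ) 1, 0 < 1 - (s^2 + l * c^2) * u^2 := by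
      intro u hu
      have h4 : u^2 ≤ 1 := by nlinarith [hu.1, hu.2]
      nlinarith [mul_nonneg hm0.le (sub_nonneg.mpr h4)]
    have hco : ContinuousOn (fun u : ℝ => 2 / (1 - (s^2 + l * c^2) * u^2)) (Set.Icc 0 1) := by
      apply ContinuousOn.div continuousOn_const (by fun_prop)
      exact fun u hu => (hd2 u hu).ne'
    exact (hco.integrableOn_compact isCompact_Icc).mono_set Set.Ioo_subset_Icc_self
  constructor
  · have hiff := (MeasureTheory.integrableOn_image_iff_integrableOn_abs_deriv_smul
      measurableSet_Ioo hderiv hinj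
      (fun μ => 1 / ((1 - l * μ) * Real.sqrt μ * Real.sqrt (c^2 + μ * s^2))))
    rw [him] at hiff
    rw [hiff]
    apply hcont2.congr
    filter_upwards [ae_restrict_mem measurableSet_Ioo] with u hu
    exact (hpoint u hu).symm
  · conv_lhs => rw [show Set.Ioo (0:ℝ) 1 = (fun u => c^2 * u^2 / (1 - s^2 * u^2)) '' Set.Ioo 0 1
      from him.symm]
    rw [MeasureTheory.integral_image_eq_integral_abs_deriv_smul measurableSet_Ioo hderiv hinj]
    exact MeasureTheory.setIntegral_congr_fun measurableSet_Ioo (fun u hu => hpoint u hu)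

end aux

theorem stmt_16 (l : ℝ) (h₀ : 0 < l) (h₁ : l < 1) :
    K (Real.sqrt l) =
      (1/π) * ∫ μ in (0:ℝ)..1, K (Real.sqrt (1 - μ)) / ((1 - l * μ) * Real.sqrt μ) := by
  have hπ : (0:ℝ) < π := Real.pi_pos
  -- pointwise rewrite of the integrand
  have hA : ∀ μ ∈ Set.Ioo (0:ℝ) 1,
      K (Real.sqrt (1 - μ)) / ((1 - l * μ) * Real.sqrt μ)
        = ∫ θ in Set.Ioo (0:ℝ) (π/2),
            1 / ((1 - l * μ) * Real.sqrt μ * Real.sqrt (Real.cos θ ^ 2 + μ * Real.sin θ ^ 2)) := by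
    intro μ hμ
    have hKμ : K (Real.sqrt (1 - μ)) = ∫ θ in Set.Ioo (0:ℝ) (π/2),
        1 / Real.sqrt (Real.cos θ ^ 2 + μ * Real.sin θ ^ 2) := by
      rw [K, Real.sq_sqrt (by linarith [hμ.2] : (0:ℝ) ≤ 1 - μ),
        intervalIntegral.integral_of_le (by positivity),
        MeasureTheory.integral_Ioc_eq_integral_Ioo]
      refine MeasureTheory.setIntegral_congr_fun measurableSet_Ioo (fun θ _ => ?_)
      rw [show 1 - (1 - μ) * Real.sin θ ^ 2 = Real.cos θ ^ 2 + μ * Real.sin θ ^ 2 from by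
        linear_combination (-1 : ℝ) * (Real.sin_sq_add_cos_sq θ)]
    rw [hKμ, ← MeasureTheory.integral_div]
    refine MeasureTheory.setIntegral_congr_fun measurableSet_Ioo (fun θ _ => ?_)
    rw [div_div, mul_comm]
  have main : ∫ μ in Set.Ioo (0:ℝ) 1, K (Real.sqrt (1 - μ)) / ((1 - l * μ) * Real.sqrt μ)
      = π * K (Real.sqrt l) := by
    calc ∫ μ in Set.Ioo (0:ℝ) 1, K (Real.sqrt (1 - μ)) / ((1 - l * μ) * Real.sqrt μ)
        = ∫ μ in Set.Ioo (0:ℝ) 1, ∫ θ in Set.Ioo (0:ℝ) (π/2),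
            1 / ((1 - l * μ) * Real.sqrt μ * Real.sqrt (Real.cos θ ^ 2 + μ * Real.sin θ ^ 2)) :=
          MeasureTheory.setIntegral_congr_fun measurableSet_Ioo hA
      _ = ∫ θ in Set.Ioo (0:ℝ) (π/2), ∫ μ in Set.Ioo (0:ℝ) 1,
            1 / ((1 - l * μ) * Real.sqrt μ * Real.sqrt (Real.cos θ ^ 2 + μ * Real.sin θ ^ 2)) := by
          apply swap_nonneg measurableSet_Ioo measurableSet_Ioo
          · have hcont : Continuous (fun p : ℝ × ℝ =>
                (1 - l * p.1) * Real.sqrt p.1 * Real.sqrt (Real.cos p.2 ^ 2 + p.1 * Real.sin p.2 ^ 2)) := by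
              fun_prop
            exact measurable_const.div hcont.measurable
          · intro μ hμ θ hθ
            have h1μ : 0 < 1 - l * μ := by nlinarith [hμ.1, hμ.2]
            have hd : 0 < Real.cos θ ^ 2 + μ * Real.sin θ ^ 2 := by
              have := den_pos one_pos hμ.1 θ
              linarith
            exact le_of_lt (one_div_pos.mpr (mul_pos (mul_pos h1μ (Real.sqrt_pos.mpr hμ.1))
              (Real.sqrt_pos.mpr hd)))
          · exact fun μ hμ => mu_slice_integrable h₀ h₁ hμ
          · intro θ hθ
            have hc : 0 < Real.cos θ := Real.cos_pos_of_mem_Ioo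
              (Set.mem_Ioo.mpr ⟨by linarith [hθ.1, Real.pi_pos], hθ.2⟩)
            have hs : 0 < Real.sin θ := Real.sin_pos_of_pos_of_lt_pi hθ.1
              (by linarith [hθ.2, Real.pi_pos])
            have hsc : Real.sin θ ^ 2 + Real.cos θ ^ 2 = 1 := Real.sin_sq_add_cos_sq θ
            have hs1 : Real.sin θ < 1 := by nlinarith
            exact (sub_mu' h₀ h₁ hs hs1 hc hsc).1
      _ = ∫ θ in Set.Ioo (0:ℝ) (π/2), ∫ u in Set.Ioo (0:ℝ) 1,
            2 / (1 - (Real.sin θ ^ 2 + l * Real.cos θ ^ 2) * u ^ 2) := by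
          refine MeasureTheory.setIntegral_congr_fun measurableSet_Ioo (fun θ hθ => ?_)
          have hc : 0 < Real.cos θ := Real.cos_pos_of_mem_Ioo
            (Set.mem_Ioo.mpr ⟨by linarith [hθ.1, Real.pi_pos], hθ.2⟩)
          have hs : 0 < Real.sin θ := Real.sin_pos_of_pos_of_lt_pi hθ.1
            (by linarith [hθ.2, Real.pi_pos])
          have hsc : Real.sin θ ^ 2 + Real.cos θ ^ 2 = 1 := Real.sin_sq_add_cos_sq θ
          have hs1 : Real.sin θ < 1 := by nlinarith
          exact (sub_mu' h₀ h₁ hs hs1 hc hsc).2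
      _ = ∫ u in Set.Ioo (0:ℝ) 1, ∫ θ in Set.Ioo (0:ℝ) (π/2),
            2 / (1 - (Real.sin θ ^ 2 + l * Real.cos θ ^ 2) * u ^ 2) := by
          apply swap_nonneg measurableSet_Ioo measurableSet_Ioo
          · have hcont : Continuous (fun p : ℝ × ℝ =>
                1 - (Real.sin p.1 ^ 2 + l * Real.cos p.1 ^ 2) * p.2 ^ 2) := by fun_prop
            exact measurable_const.div hcont.measurable
          · intro θ hθ u hu
            have hc : 0 < Real.cos θ := Real.cos_pos_of_mem_Ioo
              (Set.mem_Ioo.mpr ⟨by linarith [hθ.1, Real.pi_pos], hθ.2⟩)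
            have hsc : Real.sin θ ^ 2 + Real.cos θ ^ 2 = 1 := Real.sin_sq_add_cos_sq θ
            have hm1 : Real.sin θ ^ 2 + l * Real.cos θ ^ 2 < 1 := by
              nlinarith [mul_pos (mul_pos hc hc) (sub_pos.mpr h₁)]
            have hm0 : 0 ≤ Real.sin θ ^ 2 + l * Real.cos θ ^ 2 := by positivity
            have h4 : u ^ 2 < 1 := by nlinarith [hu.1, hu.2]
            have : 0 < 1 - (Real.sin θ ^ 2 + l * Real.cos θ ^ 2) * u ^ 2 := by
              nlinarith [mul_nonneg hm0 (sq_nonneg u),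
                mul_le_mul_of_nonneg_right hm1.le (sq_nonneg u)]
            exact le_of_lt (div_pos two_pos this)
          · intro θ hθ
            have hc : 0 < Real.cos θ := Real.cos_pos_of_mem_Ioo
              (Set.mem_Ioo.mpr ⟨by linarith [hθ.1, Real.pi_pos], hθ.2⟩)
            have hsc : Real.sin θ ^ 2 + Real.cos θ ^ 2 = 1 := Real.sin_sq_add_cos_sq θ
            have hm1 : Real.sin θ ^ 2 + l * Real.cos θ ^ 2 < 1 := by
              nlinarith [mul_pos (mul_pos hc hc) (sub_pos.mpr h₁)]
            have hm0 : 0 ≤ Real.sin θ ^ 2 + l * Real.cos θ ^ 2 := by positivity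
            have hd2 : ∀ u ∈ Set.Icc (0:ℝ) 1,
                0 < 1 - (Real.sin θ ^ 2 + l * Real.cos θ ^ 2) * u ^ 2 := by
              intro u hu
              have h4 : u ^ 2 ≤ 1 := by nlinarith [hu.1, hu.2]
              nlinarith [mul_nonneg hm0 (sub_nonneg.mpr h4)]
            have hco : ContinuousOn
                (fun u : ℝ => 2 / (1 - (Real.sin θ ^ 2 + l * Real.cos θ ^ 2) * u ^ 2))
                (Set.Icc 0 1) := by
              apply ContinuousOn.div continuousOn_const (by fun_prop)
              exact fun u hu => (hd2 u hu).ne'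
            exact (hco.integrableOn_compact isCompact_Icc).mono_set Set.Ioo_subset_Icc_self
          · intro u hu
            have hd2 : ∀ θ : ℝ, 0 < 1 - (Real.sin θ ^ 2 + l * Real.cos θ ^ 2) * u ^ 2 := by
              intro θ
              have hsc := Real.sin_sq_add_cos_sq θ
              have hb1 : Real.sin θ ^ 2 + l * Real.cos θ ^ 2 ≤ 1 := by
                nlinarith [sq_nonneg (Real.cos θ)]
              have h4 : u ^ 2 < 1 := by nlinarith [hu.1, hu.2]
              nlinarith [mul_le_mul_of_nonneg_right hb1 (sq_nonneg u)]
            have hco : ContinuousOn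
                (fun θ : ℝ => 2 / (1 - (Real.sin θ ^ 2 + l * Real.cos θ ^ 2) * u ^ 2))
                (Set.Icc 0 (π/2)) := by
              apply ContinuousOn.div continuousOn_const (by fun_prop)
              exact fun θ _ => (hd2 θ).ne'
            exact (hco.integrableOn_compact isCompact_Icc).mono_set Set.Ioo_subset_Icc_self
      _ = ∫ u in Set.Ioo (0:ℝ) 1, π / Real.sqrt ((1 - u^2) * (1 - l * u^2)) := by
          refine MeasureTheory.setIntegral_congr_fun measurableSet_Ioo (fun u hu => ?_)
          have ha : 0 < 1 - l * u ^ 2 := by nlinarith [hu.1, hu.2]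
          have hb : 0 < 1 - u ^ 2 := by nlinarith [hu.1, hu.2]
          have hci := cos_sin_integral ha hb
          rw [intervalIntegral.integral_of_le (by positivity),
            MeasureTheory.integral_Ioc_eq_integral_Ioo] at hci
          calc ∫ θ in Set.Ioo (0:ℝ) (π/2), 2 / (1 - (Real.sin θ ^ 2 + l * Real.cos θ ^ 2) * u ^ 2)
              = ∫ θ in Set.Ioo (0:ℝ) (π/2),
                  2 * (1 / ((1 - l * u ^ 2) * Real.cos θ ^ 2 + (1 - u ^ 2) * Real.sin θ ^ 2)) := by
                refine MeasureTheory.setIntegral_congr_fun measurableSet_Ioo (fun θ _ => ?_)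
                rw [show 1 - (Real.sin θ ^ 2 + l * Real.cos θ ^ 2) * u ^ 2
                    = (1 - l * u ^ 2) * Real.cos θ ^ 2 + (1 - u ^ 2) * Real.sin θ ^ 2 from by
                  linear_combination -(Real.sin_sq_add_cos_sq θ)]
                rw [div_eq_mul_one_div]
            _ = 2 * ∫ θ in Set.Ioo (0:ℝ) (π/2),
                  1 / ((1 - l * u ^ 2) * Real.cos θ ^ 2 + (1 - u ^ 2) * Real.sin θ ^ 2) :=
                MeasureTheory.integral_const_mul 2 _
            _ = 2 * (π / (2 * Real.sqrt ((1 - l * u ^ 2) * (1 - u ^ 2)))) := by rw [hci]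
            _ = π / Real.sqrt ((1 - u ^ 2) * (1 - l * u ^ 2)) := by
                rw [mul_comm (1 - l * u ^ 2) (1 - u ^ 2)]
                have h5 : 0 < Real.sqrt ((1 - u ^ 2) * (1 - l * u ^ 2)) :=
                  Real.sqrt_pos.mpr (mul_pos hb ha)
                field_simp
      _ = π * ∫ u in Set.Ioo (0:ℝ) 1, 1 / Real.sqrt ((1 - u^2) * (1 - l * u^2)) := by
          rw [← MeasureTheory.integral_const_mul]
          exact MeasureTheory.setIntegral_congr_fun measurableSet_Ioo
            (fun u _ => by rw [mul_one_div])
      _ = π * K (Real.sqrt l) := by rw [alg_form h₀ h₁]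
  rw [intervalIntegral.integral_of_le zero_le_one, MeasureTheory.integral_Ioc_eq_integral_Ioo,
    main, one_div, ← mul_assoc, inv_mul_cancel₀ hπ.ne', one_mul]
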